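/- Let n ≥ 3, x₀ ∈ ℝⁿ, R > 0, and define u(x) = (R/(|x - x₀|² - R²))^{(n-2)/2} for x ∈ ℝⁿ with |x - x₀| > R. Then A^u(x) = -2 I for all such x. -/

import Mathlib

open Real Matrix Filter

noncomputable def pgrad (n : ℕ) (u : EuclideanSpace ℝ (Fin n) → ℝ)
    (x : EuclideanSpace ℝ (Fin n)) (i : Fin n) : ℝ :=
  fderiv ℝ u x (EuclideanSpace.single i 1)

noncomputable def phess (n : ℕ) (u : EuclideanSpace ℝ (Fin n) → ℝ)
    (x : EuclideanSpace ℝ (Fin n)) (i j : Fin n) : ℝ :=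
  fderiv ℝ (fun y => fderiv ℝ u y (EuclideanSpace.single j 1)) x (EuclideanSpace.single i 1)

/-- The conformal Hessian `A^u` of a positive function `u`. -/
noncomputable def confHess (n : ℕ) (u : EuclideanSpace ℝ (Fin n) → ℝ)
    (x : EuclideanSpace ℝ (Fin n)) : Matrix (Fin n) (Fin n) ℝ :=
  Matrix.of fun i j =>
    -(2 / ((n : ℝ) - 2)) * (u x) ^ (-(((n : ℝ) + 2) / ((n : ℝ) - 2))) * phess n u x i j
    + (2 * (n : ℝ) / ((n : ℝ) - 2) ^ 2) * (u x) ^ (-(2 * (n : ℝ) / ((n : ℝ) - 2))) *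
        pgrad n u x i * pgrad n u x j
    - (2 / ((n : ℝ) - 2) ^ 2) * (u x) ^ (-(2 * (n : ℝ) / ((n : ℝ) - 2))) *
        (∑ k, (pgrad n u x k) ^ 2) * (if i = j then (1 : ℝ) else 0)

variable {n : ℕ}

lemma hasFDerivAt_fsq (x₀ : EuclideanSpace ℝ (Fin n)) (R : ℝ) (y : EuclideanSpace ℝ (Fin n)) :
    HasFDerivAt (fun z : EuclideanSpace ℝ (Fin n) => ‖z - x₀‖ ^ 2 - R ^ 2)
      ((2 : ℝ) • (innerSL ℝ (y - x₀))) y := by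
  have h1 : HasFDerivAt (fun z : EuclideanSpace ℝ (Fin n) => z - x₀)
      (ContinuousLinearMap.id ℝ _) y := (hasFDerivAt_id y).sub_const x₀
  have h2 := h1.norm_sq
  simp only [ContinuousLinearMap.comp_id] at h2
  have := h2.sub_const (R ^ 2)
  refine this.congr_fderiv ?_
  ext w
  simp [two_smul]

lemma hasFDerivAt_g (x₀ : EuclideanSpace ℝ (Fin n)) (R p : ℝ) (y : EuclideanSpace ℝ (Fin n))
    (hy : ‖y - x₀‖ ^ 2 - R ^ 2 ≠ 0) :
    HasFDerivAt (fun z : EuclideanSpace ℝ (Fin n) => R ^ p * (‖z - x₀‖ ^ 2 - R ^ 2) ^ (-p))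
      ((R ^ p * (-p * (‖y - x₀‖ ^ 2 - R ^ 2) ^ (-p - 1)) * 2) • (innerSL ℝ (y - x₀))) y := by
  have h := ((hasFDerivAt_fsq x₀ R y).rpow_const (p := -p) (Or.inl hy)).const_mul (R ^ p)
  refine h.congr_fderiv ?_
  rw [smul_smul, smul_smul]

set_option maxHeartbeats 2000000 in
/-- for `u(x) = (R/(|x-x₀|² - R²))^{(n-2)/2}` outside `B_R(x₀)`, `A^u ≡ -2 I`. -/
theorem confHess_canonical_exterior
    (n : ℕ) (hn : 3 ≤ n) (x₀ : EuclideanSpace ℝ (Fin n)) (R : ℝ) (hR : 0 < R) :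
    ∀ x : EuclideanSpace ℝ (Fin n), R < ‖x - x₀‖ →
      confHess n (fun y => (R / (‖y - x₀‖ ^ 2 - R ^ 2)) ^ (((n : ℝ) - 2) / 2)) x
        = (-2 : ℝ) • (1 : Matrix (Fin n) (Fin n) ℝ) := by
  intro x hx
  have hn3 : (3:ℝ) ≤ (n:ℝ) := by exact_mod_cast hn
  set m : ℝ := (n : ℝ) with hm
  set p : ℝ := (m - 2) / 2 with hp
  set u : EuclideanSpace ℝ (Fin n) → ℝ :=
    fun y => (R / (‖y - x₀‖ ^ 2 - R ^ 2)) ^ p with hu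
  have hm2 : m - 2 ≠ 0 := by simp only [hm]; intro h; nlinarith
  have hops : IsOpen {y : EuclideanSpace ℝ (Fin n) | R < ‖y - x₀‖} :=
    isOpen_lt continuous_const ((continuous_id.sub continuous_const).norm)
  have hqpos : ∀ y : EuclideanSpace ℝ (Fin n), R < ‖y - x₀‖ →
      0 < ‖y - x₀‖ ^ 2 - R ^ 2 := by
    intro y hy; nlinarith
  have hueq : ∀ y : EuclideanSpace ℝ (Fin n), R < ‖y - x₀‖ →
      u y = R ^ p * (‖y - x₀‖ ^ 2 - R ^ 2) ^ (-p) := by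
    intro y hy
    have hq := hqpos y hy
    show (R / (‖y - x₀‖ ^ 2 - R ^ 2)) ^ p = _
    rw [Real.div_rpow hR.le hq.le, Real.rpow_neg hq.le, div_eq_mul_inv]
  have hfd : ∀ y : EuclideanSpace ℝ (Fin n), R < ‖y - x₀‖ →
      fderiv ℝ u y
        = (R ^ p * (-p * (‖y - x₀‖ ^ 2 - R ^ 2) ^ (-p - 1)) * 2) • (innerSL ℝ (y - x₀)) := by
    intro y hy
    have hq := hqpos y hy
    have hev : u =ᶠ[nhds y]
        fun z => R ^ p * (‖z - x₀‖ ^ 2 - R ^ 2) ^ (-p) := by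
      filter_upwards [hops.mem_nhds hy] with z hz
      exact hueq z hz
    rw [hev.fderiv_eq, (hasFDerivAt_g x₀ R p y hq.ne').fderiv]
  have hgrad : ∀ y : EuclideanSpace ℝ (Fin n), R < ‖y - x₀‖ → ∀ i,
      pgrad n u y i
        = (R ^ p * (-p * (‖y - x₀‖ ^ 2 - R ^ 2) ^ (-p - 1)) * 2) * (y - x₀) i := by
    intro y hy i
    simp only [pgrad]
    rw [hfd y hy]
    simp [EuclideanSpace.inner_single_right]
  have hq : 0 < ‖x - x₀‖ ^ 2 - R ^ 2 := hqpos x hx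
  have hhess : ∀ i j, phess n u x i j =
      (-(2 * p) * R ^ p) * ((‖x - x₀‖ ^ 2 - R ^ 2) ^ (-p - 1) * (if i = j then (1:ℝ) else 0)
        + (x - x₀) j * ((-p - 1) * (‖x - x₀‖ ^ 2 - R ^ 2) ^ (-p - 1 - 1) * (2 * (x - x₀) i))) := by
    intro i j
    simp only [phess]
    have hev : (fun y => fderiv ℝ u y (EuclideanSpace.single j 1)) =ᶠ[nhds x]
        (fun y => (-(2 * p) * R ^ p) *
          ((‖y - x₀‖ ^ 2 - R ^ 2) ^ (-p - 1) * (y - x₀) j)) := by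
      filter_upwards [hops.mem_nhds hx] with z hz
      rw [hfd z hz]
      simp only [ContinuousLinearMap.coe_smul', Pi.smul_apply, innerSL_apply_apply,
        EuclideanSpace.inner_single_right, _root_.map_one, smul_eq_mul, RCLike.star_def, conj_trivial,
        one_mul]
      ring
    rw [hev.fderiv_eq]
    have h1 : HasFDerivAt (fun y : EuclideanSpace ℝ (Fin n) => (‖y - x₀‖ ^ 2 - R ^ 2) ^ (-p - 1))
        (((-p - 1) * (‖x - x₀‖ ^ 2 - R ^ 2) ^ (-p - 1 - 1)) • ((2:ℝ) • innerSL ℝ (x - x₀))) x :=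
      (hasFDerivAt_fsq x₀ R x).rpow_const (Or.inl hq.ne')
    have h2 : HasFDerivAt (fun y : EuclideanSpace ℝ (Fin n) => (y - x₀) j)
        (EuclideanSpace.proj j : EuclideanSpace ℝ (Fin n) →L[ℝ] ℝ) x := by
      have h : (fun y : EuclideanSpace ℝ (Fin n) => (y - x₀) j)
          = fun y => (EuclideanSpace.proj (𝕜 := ℝ) j) y - x₀ j := by
        ext y; simp [EuclideanSpace.proj]
      rw [h]
      exact ((EuclideanSpace.proj (𝕜 := ℝ) j).hasFDerivAt).sub_const _
    have h3 : HasFDerivAt (fun y : EuclideanSpace ℝ (Fin n) =>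
        -(2 * p) * R ^ p * ((‖y - x₀‖ ^ 2 - R ^ 2) ^ (-p - 1) * (y - x₀) j)) _ x :=
      (h1.mul h2).const_mul (-(2 * p) * R ^ p)
    rw [h3.fderiv]
    simp only [ContinuousLinearMap.coe_smul', Pi.smul_apply, ContinuousLinearMap.add_apply,
      ContinuousLinearMap.coe_smul, innerSL_apply_apply, EuclideanSpace.inner_single_right, _root_.map_one,
      smul_eq_mul, RCLike.star_def, conj_trivial, one_mul]
    have hproj : (EuclideanSpace.proj (𝕜 := ℝ) j) (EuclideanSpace.single i 1)
        = if i = j then (1:ℝ) else 0 := by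
      simp [EuclideanSpace.proj, EuclideanSpace.single_apply, eq_comm]
    rw [hproj]
  have hnormsq : ∑ k, ((x - x₀) k) ^ 2 = ‖x - x₀‖ ^ 2 := by
    rw [EuclideanSpace.norm_eq, Real.sq_sqrt (by positivity)]
    simp [sq_abs]
  -- final algebra
  ext i j
  simp only [confHess, Matrix.of_apply, Matrix.smul_apply, Matrix.one_apply, smul_eq_mul]
  rw [hhess i j]
  simp only [hgrad x hx]
  have hsum : ∑ k, ((R ^ p * (-p * (‖x - x₀‖ ^ 2 - R ^ 2) ^ (-p - 1)) * 2) * (x - x₀) k) ^ 2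
      = (R ^ p * (-p * (‖x - x₀‖ ^ 2 - R ^ 2) ^ (-p - 1)) * 2) ^ 2 * (‖x - x₀‖ ^ 2) := by
    rw [← hnormsq, Finset.mul_sum]
    congr 1; ext k; ring
  rw [hsum]
  rw [← hm]
  have hux : u x = (R / (‖x - x₀‖ ^ 2 - R ^ 2)) ^ p := rfl
  rw [hux]
  set q : ℝ := ‖x - x₀‖ ^ 2 - R ^ 2 with hqd
  rw [show ‖x - x₀‖ ^ 2 = q + R ^ 2 by rw [hqd]; ring]
  have ht : 0 < R / q := div_pos hR hq
  have hpe1 : p * (-((m + 2) / (m - 2))) = -(p + 2) := by rw [hp]; field_simp; ring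
  have hpe2 : p * (-(2 * m / (m - 2))) = -(p + (p + 2)) := by rw [hp]; field_simp; ring
  have F3 : ((R / q) ^ p) ^ (-((m + 2) / (m - 2))) = (q ^ p * q ^ 2) / (R ^ p * R ^ 2) := by
    rw [← Real.rpow_mul ht.le, hpe1, Real.rpow_neg ht.le, ← Real.inv_rpow ht.le, inv_div,
      Real.div_rpow hq.le hR.le, Real.rpow_add hq, Real.rpow_add hR, Real.rpow_two, Real.rpow_two]
  have F4 : ((R / q) ^ p) ^ (-(2 * m / (m - 2)))
      = (q ^ p * (q ^ p * q ^ 2)) / (R ^ p * (R ^ p * R ^ 2)) := by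
    rw [← Real.rpow_mul ht.le, hpe2, Real.rpow_neg ht.le, ← Real.inv_rpow ht.le, inv_div,
      Real.div_rpow hq.le hR.le, Real.rpow_add hq, Real.rpow_add hq, Real.rpow_add hR,
      Real.rpow_add hR, Real.rpow_two, Real.rpow_two]
  have F1 : q ^ (-p - 1) = (q ^ p * q)⁻¹ := by
    rw [show -p - 1 = -(p + 1) by ring, Real.rpow_neg hq.le, Real.rpow_add hq, Real.rpow_one]
  have F2 : q ^ (-p - 1 - 1) = (q ^ p * q ^ 2)⁻¹ := by
    rw [show -p - 1 - 1 = -(p + 2) by ring, Real.rpow_neg hq.le, Real.rpow_add hq, Real.rpow_two]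
  rw [F3, F4, F2, F1]
  have hqp : (0:ℝ) < q ^ p := Real.rpow_pos_of_pos hq p
  have hRp : (0:ℝ) < R ^ p := Real.rpow_pos_of_pos hR p
  have hppos : (0:ℝ) < p := by rw [hp]; linarith
  rw [show m = 2 * p + 2 by rw [hp]; ring]
  generalize hQP : q ^ p = QP at *
  generalize hRP : R ^ p = RP at *
  clear_value m p u q
  rcases eq_or_ne i j with rfl | hij
  · simp only [eq_self_iff_true, if_true, mul_one]
    field_simp
    rw [div_eq_iff (by rw [add_sub_cancel_right]; positivity)]
    ring
  · simp only [if_neg hij]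
    field_simp
    ring
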